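/- arXiv:1605.02374 — 2 statements merged into one kernel-verified Lean document; each statement's English description precedes it below -/
import Mathlib

section
/- Let α > 0, d = 1, and define p(α,ρ) = 2αρ/(α+1) − 1 for ρ ∈ ((α+1)/(2α) ∨ 1, (α+1)/α], p(α,ρ) = α(ρ−1) for ρ > (α+1)/α, and p(α,ρ) = 0 for ρ ≤ (α+1)/(2α) ∨ 1. Then for every δ with (α+1)/(4α) ∨ α/(α+1) ∨ 1/2 ≤ δ ≤ (2α+1)/(2α) and every sufficiently large M, the quantity δ ∧ inf_{ρ ∈ [δ, M]} ( p(α,ρ) ∨ (2δ − ρ) ) equals (4αδ − α − 1)/(3α + 1), and the infimum is attained at ρ = (2δ+1)(α+1)/(3α+1). -/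
/-- The tail exponent `p(α,ρ)` for `d = 1` (Theorem 2.2), extended by `0`
below the first regime. -/
noncomputable def pExp (α ρ : ℝ) : ℝ :=
  if ρ ≤ max ((α + 1) / (2 * α)) 1 then 0
  else if ρ ≤ (α + 1) / α then 2 * α * ρ / (α + 1) - 1
  else α * (ρ - 1)

/-- Exponent computation in the third regime of Theorem 2.5 for `d = 1`:
for `(α+1)/(4α) ∨ α/(α+1) ∨ 1/2 ≤ δ ≤ (2α+1)/(2α)` and `M` large,
`δ ∧ inf_{ρ ∈ [δ,M]} (p(α,ρ) ∨ (2δ−ρ)) = (4αδ−α−1)/(3α+1)`, attained at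
`ρ = (2δ+1)(α+1)/(3α+1)`. -/
theorem displacement_exponent_third_regime
    (α δ : ℝ) (hα : 0 < α)
    (hδ₁ : max ((α + 1) / (4 * α)) (max (α / (α + 1)) (1 / 2)) ≤ δ)
    (hδ₂ : δ ≤ (2 * α + 1) / (2 * α)) :
    ∃ M₀ : ℝ, ∀ M ≥ M₀,
      min δ (sInf ((fun ρ => max (pExp α ρ) (2 * δ - ρ)) '' Set.Icc δ M)) =
        (4 * α * δ - α - 1) / (3 * α + 1) ∧
      (2 * δ + 1) * (α + 1) / (3 * α + 1) ∈ Set.Icc δ M ∧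
      max (pExp α ((2 * δ + 1) * (α + 1) / (3 * α + 1)))
          (2 * δ - (2 * δ + 1) * (α + 1) / (3 * α + 1)) =
        sInf ((fun ρ => max (pExp α ρ) (2 * δ - ρ)) '' Set.Icc δ M) := by
  have hα1 : (0:ℝ) < α + 1 := by linarith
  have h3 : (0:ℝ) < 3 * α + 1 := by linarith
  have h4a : (0:ℝ) < 4 * α := by linarith
  have h2a : (0:ℝ) < 2 * α := by linarith
  have h1 : α + 1 ≤ 4 * α * δ := by
    have := le_trans (le_max_left _ _) hδ₁
    rw [div_le_iff₀ h4a] at this; linarith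
  have h2 : α ≤ δ * (α + 1) := by
    have := le_trans (le_trans (le_max_left _ _) (le_max_right _ _)) hδ₁
    rw [div_le_iff₀ hα1] at this; linarith
  have hhalf : (1:ℝ)/2 ≤ δ :=
    le_trans (le_trans (le_max_right _ _) (le_max_right _ _)) hδ₁
  have h4 : 2 * α * δ ≤ 2 * α + 1 := by
    rw [le_div_iff₀ h2a] at hδ₂; linarith
  set q := (4 * α * δ - α - 1) / (3 * α + 1) with hqdef
  set ρ := (2 * δ + 1) * (α + 1) / (3 * α + 1) with hρdef
  have hδpos : 0 < δ := by linarith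
  have hρδ : δ ≤ ρ := by
    rw [hρdef, le_div_iff₀ h3]; nlinarith
  have hqδ : q ≤ δ := by
    rw [hqdef, div_le_iff₀ h3]; nlinarith
  have hq0 : 0 ≤ q := by
    rw [hqdef]; apply div_nonneg <;> linarith
  have hq1 : q ≤ 1 := by
    rw [hqdef, div_le_iff₀ h3]; linarith
  have hρA : max ((α + 1) / (2 * α)) 1 ≤ ρ := by
    apply max_le
    · rw [div_le_iff₀ h2a, hρdef, div_mul_eq_mul_div, le_div_iff₀ h3]; nlinarith
    · rw [hρdef, le_div_iff₀ h3]; nlinarith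
  have hρup : ρ ≤ (α + 1) / α := by
    rw [hρdef, div_le_div_iff₀ h3 hα]; nlinarith
  have hkey : 2 * δ - ρ = q := by
    rw [hρdef, hqdef]; field_simp; ring
  have hid : 2 * α * ρ / (α + 1) - 1 = q := by
    rw [hρdef, hqdef]; field_simp; ring
  have hpρ : max (pExp α ρ) (2 * δ - ρ) = q := by
    rw [hkey]
    rcases eq_or_lt_of_le hρA with h | h
    · rw [pExp, if_pos h.symm.le]; exact max_eq_right hq0
    · rw [pExp, if_neg (not_le.mpr h), if_pos hρup, hid, max_self]
  refine ⟨ρ, fun M hM => ?_⟩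
  have hlb : ∀ x ∈ Set.Icc δ M, q ≤ max (pExp α x) (2 * δ - x) := by
    rintro x ⟨hx1, hx2⟩
    by_cases hxρ : x ≤ ρ
    · refine le_trans ?_ (le_max_right _ _)
      rw [← hkey]; linarith
    · push_neg at hxρ
      have hxA : max ((α + 1) / (2 * α)) 1 < x := lt_of_le_of_lt hρA hxρ
      refine le_trans ?_ (le_max_left _ _)
      rw [pExp, if_neg (not_le.mpr hxA)]
      by_cases hx3 : x ≤ (α + 1) / α
      · rw [if_pos hx3, ← hid]
        have : 2 * α * ρ ≤ 2 * α * x := by nlinarith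
        gcongr
      · rw [if_neg hx3]
        push_neg at hx3
        rw [div_lt_iff₀ hα] at hx3
        nlinarith
  have hmemρ : ρ ∈ Set.Icc δ M := ⟨hρδ, hM⟩
  have hmem : q ∈ (fun ρ => max (pExp α ρ) (2 * δ - ρ)) '' Set.Icc δ M :=
    ⟨ρ, hmemρ, hpρ⟩
  have hbdd : BddBelow ((fun ρ => max (pExp α ρ) (2 * δ - ρ)) '' Set.Icc δ M) := by
    refine ⟨q, ?_⟩
    rintro y ⟨x, hx, rfl⟩
    exact hlb x hx
  have hInf : sInf ((fun ρ => max (pExp α ρ) (2 * δ - ρ)) '' Set.Icc δ M) = q := by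
    refine le_antisymm (csInf_le hbdd hmem) (le_csInf ⟨q, hmem⟩ ?_)
    rintro y ⟨x, hx, rfl⟩
    exact hlb x hx
  refine ⟨?_, hmemρ, ?_⟩
  · rw [hInf]; exact min_eq_right hqδ
  · rw [hInf]; exact hpρ
end

section
/- Let α > 0, d = 1, and p(α,ρ) as in the previous context. For every δ with (2α+1)/(2α) < δ < α/(α−1)_+ (with the convention α/0 = ∞) and sufficiently large M, the quantity δ ∧ inf_{ρ ∈ [δ, M]} ( p(α,ρ) ∨ (2δ − ρ) ) equals α(2δ − 1)/(α + 1), and the infimum is attained at ρ = (2δ + α)/(α + 1), which lies in ((α+1)/α, M]. -/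
/-- Exponent computation in the fourth regime of Theorem 2.5 for `d = 1`:
for `(2α+1)/(2α) < δ < α/(α−1)₊` (with `α/0 = ∞`) and `M` large,
`δ ∧ inf_{ρ ∈ [δ,M]} (p(α,ρ) ∨ (2δ−ρ)) = α(2δ−1)/(α+1)`, attained at
`ρ = (2δ+α)/(α+1) ∈ ((α+1)/α, M]`. -/
theorem displacement_exponent_fourth_regime
    (α δ : ℝ) (hα : 0 < α)
    (hδ₁ : (2 * α + 1) / (2 * α) < δ)
    (hδ₂ : 1 < α → δ < α / (α - 1)) :
    ∃ M₀ : ℝ, ∀ M ≥ M₀,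
      min δ (sInf ((fun ρ => max (pExp α ρ) (2 * δ - ρ)) '' Set.Icc δ M)) =
        α * (2 * δ - 1) / (α + 1) ∧
      (2 * δ + α) / (α + 1) ∈ Set.Icc δ M ∧
      (2 * δ + α) / (α + 1) ∈ Set.Ioc ((α + 1) / α) M ∧
      max (pExp α ((2 * δ + α) / (α + 1))) (2 * δ - (2 * δ + α) / (α + 1)) =
        sInf ((fun ρ => max (pExp α ρ) (2 * δ - ρ)) '' Set.Icc δ M) := by
  have hα1 : (0:ℝ) < α + 1 := by linarith
  set v := α * (2 * δ - 1) / (α + 1) with hv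
  set ρ := (2 * δ + α) / (α + 1) with hρ
  have hδ1 : 1 < δ := by
    have h : (1:ℝ) < (2 * α + 1) / (2 * α) := by
      rw [lt_div_iff₀ (by linarith)]; linarith
    linarith
  have hδα : δ * (α - 1) < α := by
    rcases le_or_gt α 1 with h | h
    · nlinarith
    · have h2 := hδ₂ h
      rw [lt_div_iff₀ (by linarith)] at h2
      linarith
  have hρδ : δ < ρ := by
    rw [hρ, lt_div_iff₀ hα1]; nlinarith
  have hρa : (α + 1) / α < ρ := by
    rw [hρ, div_lt_div_iff₀ hα hα1]
    have h2 : (2 * α + 1) / (2 * α) < δ := hδ₁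
    rw [div_lt_iff₀ (by linarith : (0:ℝ) < 2 * α)] at h2
    nlinarith
  have hmaxle : max ((α + 1) / (2 * α)) 1 ≤ (α + 1) / α := by
    apply max_le
    · rw [div_le_div_iff₀ (by linarith) hα]; nlinarith
    · rw [le_div_iff₀ hα]; linarith
  have hvρ : v = α * (ρ - 1) := by
    rw [hρ, hv]; field_simp; ring_nf
  have hpρ : pExp α ρ = v := by
    simp only [pExp]
    rw [if_neg (by push_neg; exact lt_of_le_of_lt hmaxle hρa),
        if_neg (by push_neg; exact hρa)]
    exact hvρ.symm
  have h2δρ : 2 * δ - ρ = v := by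
    rw [hρ, hv]; field_simp; ring
  have hvδ : v < δ := by
    rw [hv, div_lt_iff₀ hα1]; nlinarith
  refine ⟨ρ, fun M hM => ?_⟩
  have hmem : ρ ∈ Set.Icc δ M := ⟨hρδ.le, hM⟩
  have hfρ : max (pExp α ρ) (2 * δ - ρ) = v := by rw [hpρ, h2δρ, max_self]
  have hleast : IsLeast ((fun r => max (pExp α r) (2 * δ - r)) '' Set.Icc δ M) v := by
    constructor
    · exact ⟨ρ, hmem, hfρ⟩
    · rintro x ⟨r, ⟨hr1, hr2⟩, rfl⟩
      rcases le_or_gt r ρ with h | h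
      · refine le_trans ?_ (le_max_right _ _)
        linarith
      · refine le_trans ?_ (le_max_left _ _)
        have hra : (α + 1) / α < r := lt_trans hρa h
        simp only [pExp]
        rw [if_neg (by push_neg; exact lt_of_le_of_lt hmaxle hra),
            if_neg (by push_neg; exact hra)]
        rw [hvρ]; nlinarith
  have hsInf := hleast.csInf_eq
  exact ⟨by rw [hsInf]; exact min_eq_right hvδ.le, hmem, ⟨hρa, hM⟩, by rw [hsInf, hfρ]⟩
end
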